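/- arXiv:0912.0448 — 3 statements merged into one kernel-verified Lean document; each statement's English description precedes it below -/
import Mathlib

section
/- (Berlekamp's rule is a homomorphism to Z_(2)) The value assigned to a hackenbush string (a finite word over {blue, red}) — where counters below the first color change get weight 1, subsequent counters get weights 1/2, 1/4, ..., blue counters count positively and red negatively — extends additively to a monoid homomorphism from the free commutative monoid on strings to the additive group Z_(2) of dyadic rationals, and this homomorphism is surjective; moreover each dyadic rational is the value of exactly one single string. -/
/-- Auxiliary computation of Berlekamp's rule. The arguments are: whether a
color change has already occurred below, the color of the previous counter, the
weight of the previous counter, and the remaining counters (bottom to top,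
`true` = blue, `false` = red). A counter with no opposite color below it has
weight 1; any later counter has half the weight of the counter below it. -/
def bvalAux : Bool → Bool → ℚ → List Bool → ℚ
  | _, _, _, [] => 0
  | changed, prev, w, b :: t =>
      let changed' := changed || (b != prev)
      let w' := if changed' then w / 2 else 1
      (if b then w' else -w') + bvalAux changed' b w' t

/-- Berlekamp's value of a hackenbush string: the sum of the weights of the
blue counters minus the sum of the weights of the red counters. -/
def bval : List Bool → ℚ
  | [] => 0
  | b :: t => (if b then 1 else -1) + bvalAux false b 1 t

/-- The value of a position (a formal sum of hackenbush strings). -/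
def bvalPos (s : Multiset (List Bool)) : ℚ := (s.map bval).sum

def fval (t : List Bool) : ℚ := bvalAux true false 1 t

lemma bvalAux_true (p p' : Bool) (w : ℚ) (t : List Bool) :
    bvalAux true p w t = bvalAux true p' w t := by
  cases t with
  | nil => rfl
  | cons b t => simp [bvalAux]

lemma bvalAux_smul (t : List Bool) : ∀ w : ℚ, ∀ p, bvalAux true p w t = w * bvalAux true p 1 t := by
  induction t with
  | nil => simp [bvalAux]
  | cons b t ih =>
    intro w p
    simp only [bvalAux, Bool.true_or, if_pos]
    rw [ih (w/2) b, ih ((1:ℚ)/2) b]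
    cases b <;> simp <;> ring

lemma fval_nil : fval [] = 0 := rfl

lemma fval_cons (b : Bool) (t : List Bool) :
    fval (b :: t) = (if b then (1:ℚ)/2 else -(1/2)) + fval t / 2 := by
  unfold fval
  simp only [bvalAux, Bool.true_or, if_pos]
  rw [bvalAux_smul t ((1:ℚ)/2) b, bvalAux_true b false]
  cases b <;> simp <;> ring

lemma fval_bound (t : List Bool) : |fval t| < 1 := by
  induction t with
  | nil => simp [fval_nil]
  | cons b t ih =>
    rw [abs_lt] at ih ⊢
    rw [fval_cons]
    obtain ⟨h1, h2⟩ := ih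
    constructor <;> cases b <;> simp <;> linarith

lemma fval_pos (t : List Bool) : 0 < fval (true :: t) := by
  have := (abs_lt.mp (fval_bound t)).1
  rw [fval_cons]; simp; linarith

lemma fval_neg (t : List Bool) : fval (false :: t) < 0 := by
  have := (abs_lt.mp (fval_bound t)).2
  rw [fval_cons]; simp; linarith

lemma fval_inj : ∀ t1 t2 : List Bool, fval t1 = fval t2 → t1 = t2 := by
  intro t1
  induction t1 with
  | nil =>
    intro t2 h
    cases t2 with
    | nil => rfl
    | cons b t =>
      exfalso
      rw [fval_nil] at h
      cases b
      · have := fval_neg t; linarith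
      · have := fval_pos t; linarith
  | cons b t ih =>
    intro t2 h
    cases t2 with
    | nil =>
      exfalso
      rw [fval_nil] at h
      cases b
      · have := fval_neg t; linarith
      · have := fval_pos t; linarith
    | cons b2 t2 =>
      have hb : b = b2 := by
        cases b <;> cases b2 <;> first
          | rfl
          | (exfalso
             first
               | (have h1 := fval_neg t; have h2 := fval_pos t2; linarith)
               | (have h1 := fval_pos t; have h2 := fval_neg t2; linarith))
      subst hb
      rw [fval_cons, fval_cons] at h
      have : fval t = fval t2 := by cases b <;> simp at h <;> linarith
      rw [ih t2 this]

lemma fval_dyadic (t : List Bool) : ∃ c : ℤ, fval t = (c : ℚ) / 2 ^ t.length := by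
  induction t with
  | nil => exact ⟨0, by simp [fval_nil]⟩
  | cons b t ih =>
    obtain ⟨c, hc⟩ := ih
    refine ⟨if b then 2 ^ t.length + c else c - 2 ^ t.length, ?_⟩
    rw [fval_cons, hc, List.length_cons]
    have h2 : (2:ℚ) ^ t.length ≠ 0 := by positivity
    cases b <;> simp <;> push_cast <;> rw [pow_succ] <;> field_simp <;> ring

lemma bvalAux_rep_nil (m : ℕ) : bvalAux false true 1 (List.replicate m true) = m := by
  induction m with
  | zero => simp [bvalAux]
  | succ m ih =>
    rw [List.replicate_succ]
    simp only [bvalAux]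
    simp [ih]
    ring

lemma bvalAux_rep (m : ℕ) (t : List Bool) :
    bvalAux false true 1 (List.replicate m true ++ false :: t) = m - 1/2 + fval t / 2 := by
  induction m with
  | zero =>
    simp only [List.replicate, List.nil_append, bvalAux]
    norm_num
    rw [bvalAux_smul t ((1:ℚ)/2) false, bvalAux_true false false]
    unfold fval
    ring
  | succ m ih =>
    rw [List.replicate_succ, List.cons_append]
    simp only [bvalAux]
    simp [ih]
    push_cast
    ring

lemma bval_rep (m : ℕ) : bval (List.replicate m true) = m := by
  cases m with
  | zero => simp [bval]
  | succ m =>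
    rw [List.replicate_succ]
    simp only [bval]
    rw [bvalAux_rep_nil]
    push_cast; ring

lemma bval_mixed (m : ℕ) (t : List Bool) :
    bval (List.replicate (m+1) true ++ false :: t) = (m+1) - 1/2 + fval t / 2 := by
  rw [List.replicate_succ, List.cons_append]
  simp only [bval]
  rw [bvalAux_rep]
  push_cast; ring

lemma bvalAux_not (t : List Bool) :
    ∀ ch p w, bvalAux ch (!p) w (t.map not) = - bvalAux ch p w t := by
  induction t with
  | nil => intro ch p w; simp [bvalAux]
  | cons b t ih =>
    intro ch p w
    simp only [List.map_cons, bvalAux]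
    have hb : ((!b) != (!p)) = (b != p) := by cases b <;> cases p <;> rfl
    rw [hb]
    have := ih (ch || (b != p)) b (if (ch || (b != p)) then w/2 else 1)
    cases b <;> simp at this ⊢ <;> rw [this] <;> ring

lemma bval_not (l : List Bool) : bval (l.map not) = - bval l := by
  cases l with
  | nil => simp [bval]
  | cons b t =>
    simp only [List.map_cons, bval]
    have := bvalAux_not t false b 1
    cases b <;> simp at this ⊢ <;> rw [this] <;> ring

lemma decomp (t : List Bool) :
    (∃ m, true :: t = List.replicate (m+1) true) ∨
    (∃ m t', true :: t = List.replicate (m+1) true ++ false :: t') := by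
  induction t with
  | nil => exact Or.inl ⟨0, rfl⟩
  | cons b t ih =>
    cases b with
    | false => exact Or.inr ⟨0, t, rfl⟩
    | true =>
      rcases ih with ⟨m, hm⟩ | ⟨m, t', hm⟩
      · exact Or.inl ⟨m+1, by rw [List.replicate_succ, ← hm]⟩
      · exact Or.inr ⟨m+1, t', by rw [List.replicate_succ, List.cons_append, ← hm]⟩

lemma bval_true_pos (t : List Bool) : 0 < bval (true :: t) := by
  rcases decomp t with ⟨m, hm⟩ | ⟨m, t', hm⟩
  · rw [hm, bval_rep]; positivity
  · rw [hm, bval_mixed]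
    have h1 := (abs_lt.mp (fval_bound t')).1
    have h2 : (0:ℚ) ≤ m := by positivity
    linarith

lemma bval_false_neg (t : List Bool) : bval (false :: t) < 0 := by
  have h1 := bval_true_pos (t.map not)
  have h2 := bval_not (false :: t)
  simp only [List.map_cons, Bool.not_false] at h2
  linarith

lemma bval_nil : bval [] = 0 := rfl

lemma bval_inj_true : ∀ t1 t2 : List Bool, bval (true::t1) = bval (true::t2) → t1 = t2 := by
  intro t1 t2 h
  rcases decomp t1 with ⟨m1, h1⟩ | ⟨m1, s1, h1⟩ <;>
    rcases decomp t2 with ⟨m2, h2⟩ | ⟨m2, s2, h2⟩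
  · rw [h1, h2, bval_rep, bval_rep] at h
    have hm : m1 + 1 = m2 + 1 := by exact_mod_cast h
    have : (true :: t1 : List Bool) = true :: t2 := by rw [h1, h2, hm]
    simpa using this
  · exfalso
    rw [h1, h2, bval_rep, bval_mixed] at h
    have hb := abs_lt.mp (fval_bound s2)
    have hA : (m2:ℚ) < (m1:ℚ) + 1 := by push_cast at h ⊢; linarith
    have hB : (m1:ℚ) + 1 < (m2:ℚ) + 1 := by push_cast at h ⊢; linarith
    have hA' : m2 < m1 + 1 := by exact_mod_cast hA
    have hB' : m1 + 1 < m2 + 1 := by exact_mod_cast hB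
    omega
  · exfalso
    rw [h1, h2, bval_mixed, bval_rep] at h
    have hb := abs_lt.mp (fval_bound s1)
    have hA : (m1:ℚ) < (m2:ℚ) + 1 := by push_cast at h ⊢; linarith
    have hB : (m2:ℚ) + 1 < (m1:ℚ) + 1 := by push_cast at h ⊢; linarith
    have hA' : m1 < m2 + 1 := by exact_mod_cast hA
    have hB' : m2 + 1 < m1 + 1 := by exact_mod_cast hB
    omega
  · rw [h1, h2, bval_mixed, bval_mixed] at h
    have hb1 := abs_lt.mp (fval_bound s1)
    have hb2 := abs_lt.mp (fval_bound s2)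
    have hA : (m1:ℚ) < (m2:ℚ) + 1 := by linarith
    have hB : (m2:ℚ) < (m1:ℚ) + 1 := by linarith
    have hA' : m1 < m2 + 1 := by exact_mod_cast hA
    have hB' : m2 < m1 + 1 := by exact_mod_cast hB
    have hm : m1 = m2 := by omega
    subst hm
    have hf : fval s1 = fval s2 := by linarith
    have hs : s1 = s2 := fval_inj _ _ hf
    have : (true :: t1 : List Bool) = true :: t2 := by rw [h1, h2, hs]
    simpa using this

lemma bval_inj : ∀ l1 l2 : List Bool, bval l1 = bval l2 → l1 = l2 := by
  have key : ∀ t1 t2 : List Bool, bval (false::t1) = bval (false::t2) → t1 = t2 := by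
    intro t1 t2 h
    have e1 := bval_not (false :: t1)
    have e2 := bval_not (false :: t2)
    simp only [List.map_cons, Bool.not_false] at e1 e2
    have : bval (true :: t1.map not) = bval (true :: t2.map not) := by rw [e1, e2, h]
    have hmap := bval_inj_true _ _ this
    have hninj : Function.Injective not := by intro a b hab; cases a <;> cases b <;> simp_all
    exact List.map_injective_iff.mpr hninj hmap
  intro l1 l2 h
  cases l1 with
  | nil =>
    cases l2 with
    | nil => rfl
    | cons b t =>
      exfalso; rw [bval_nil] at h
      cases b
      · have := bval_false_neg t; linarith
      · have := bval_true_pos t; linarith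
  | cons b1 t1 =>
    cases l2 with
    | nil =>
      exfalso; rw [bval_nil] at h
      cases b1
      · have := bval_false_neg t1; linarith
      · have := bval_true_pos t1; linarith
    | cons b2 t2 =>
      cases b1 <;> cases b2
      · rw [key t1 t2 h]
      · exfalso
        have := bval_false_neg t1; have := bval_true_pos t2; linarith
      · exfalso
        have := bval_true_pos t1; have := bval_false_neg t2; linarith
      · rw [bval_inj_true t1 t2 h]

lemma bval_dyadic_true (t : List Bool) : ∃ a : ℤ, ∃ k : ℕ, bval (true :: t) = (a:ℚ) / 2 ^ k := by
  rcases decomp t with ⟨m, hm⟩ | ⟨m, t', hm⟩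
  · exact ⟨m+1, 0, by rw [hm, bval_rep]; push_cast; simp⟩
  · obtain ⟨c, hc⟩ := fval_dyadic t'
    refine ⟨(2*m+1) * 2 ^ t'.length + c, t'.length + 1, ?_⟩
    rw [hm, bval_mixed, hc]
    have h2 : (2:ℚ) ^ t'.length ≠ 0 := by positivity
    push_cast
    rw [pow_succ]
    field_simp
    ring

lemma bval_dyadic (l : List Bool) : ∃ a : ℤ, ∃ k : ℕ, bval l = (a:ℚ) / 2 ^ k := by
  cases l with
  | nil => exact ⟨0, 0, by simp [bval_nil]⟩
  | cons b t =>
    cases b with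
    | true => exact bval_dyadic_true t
    | false =>
      obtain ⟨a, k, h⟩ := bval_dyadic_true (t.map not)
      refine ⟨-a, k, ?_⟩
      have e := bval_not (false :: t)
      simp only [List.map_cons, Bool.not_false] at e
      push_cast
      rw [neg_div]
      linarith [e, h]

def decodeF : ℕ → ℤ → List Bool
  | 0, _ => []
  | k+1, a => if a = 0 then [] else
      if 0 < a then true :: decodeF k (a - 2^k) else false :: decodeF k (a + 2^k)

lemma fval_decodeF : ∀ k : ℕ, ∀ a : ℤ, |a| < 2^k → fval (decodeF k a) = (a:ℚ) / 2 ^ k := by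
  intro k
  induction k with
  | zero =>
    intro a h
    rw [abs_lt] at h
    have : a = 0 := by omega
    subst this
    simp [decodeF, fval_nil]
  | succ k ih =>
    intro a h
    rw [abs_lt] at h
    have h2 : (2:ℤ)^(k+1) = 2 * 2^k := by ring
    rw [h2] at h
    by_cases h0 : a = 0
    · subst h0; simp [decodeF, fval_nil]
    by_cases hp : 0 < a
    · rw [decodeF, if_neg h0, if_pos hp, fval_cons]
      rw [ih (a - 2^k) (by rw [abs_lt]; constructor <;> omega)]
      have hq : (2:ℚ) ^ k ≠ 0 := by positivity
      push_cast
      simp only [↓reduceIte]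
      rw [pow_succ]
      field_simp
      try ring
    · rw [decodeF, if_neg h0, if_neg hp, fval_cons]
      rw [ih (a + 2^k) (by rw [abs_lt]; constructor <;> omega)]
      have hq : (2:ℚ) ^ k ≠ 0 := by positivity
      push_cast
      rw [pow_succ]
      field_simp
      try ring

lemma exists_bval_pos (a : ℤ) (ha : 0 < a) (k : ℕ) :
    ∃ l : List Bool, bval l = (a:ℚ) / 2 ^ k := by
  by_cases hd : (2^k : ℤ) ∣ a
  · obtain ⟨c, hc⟩ := hd
    have hc0 : 0 < c := by
      by_contra hcn
      push_neg at hcn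
      have : (2:ℤ)^k > 0 := by positivity
      nlinarith
    refine ⟨List.replicate c.toNat true, ?_⟩
    rw [bval_rep]
    have hcast : ((c.toNat : ℚ)) = (c : ℚ) := by
      exact_mod_cast congrArg (Int.cast : ℤ → ℚ) (Int.toNat_of_nonneg hc0.le)
    rw [hcast, hc]
    have h2 : (2:ℚ) ^ k ≠ 0 := by positivity
    push_cast
    field_simp
  · set q : ℚ := (a:ℚ) / 2 ^ k with hq
    have hq0 : 0 < q := by rw [hq]; positivity
    set n : ℤ := ⌈q⌉ with hn
    have hn1 : 0 < n := Int.ceil_pos.mpr hq0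
    have hub : q ≤ (n:ℚ) := Int.le_ceil q
    have hlb : (n:ℚ) - 1 < q := by
      have := Int.ceil_lt_add_one q
      push_cast at this
      linarith
    have hne : q ≠ (n:ℚ) := by
      intro hEq
      apply hd
      refine ⟨n, ?_⟩
      have h2 : (2:ℚ) ^ k ≠ 0 := by positivity
      have : (a : ℚ) = (n:ℚ) * 2 ^ k := by
        rw [hq] at hEq
        field_simp at hEq
        linarith
      have : (a : ℚ) = ((2^k * n : ℤ) : ℚ) := by push_cast; linarith
      exact_mod_cast this
    have hqlt : q < (n:ℚ) := lt_of_le_of_ne hub hne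
    -- integer bounds on a
    have hP : (0:ℚ) < 2 ^ k := by positivity
    have hub' : (a:ℚ) < (n:ℚ) * 2 ^ k := by
      rw [hq, div_lt_iff₀ hP] at hqlt; linarith
    have hlb' : ((n:ℚ) - 1) * 2 ^ k < (a:ℚ) := by
      rw [hq, lt_div_iff₀ hP] at hlb; linarith
    have hubZ : a < n * 2 ^ k := by exact_mod_cast hub'
    have hlbZ : (n - 1) * 2 ^ k < a := by exact_mod_cast hlb'
    set a' : ℤ := 2 * a - (2 * n - 1) * 2 ^ k with ha'
    have hbound : |a'| < 2 ^ k := by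
      rw [abs_lt, ha']
      constructor <;> nlinarith
    obtain ⟨m, hm⟩ : ∃ m : ℕ, (m : ℤ) + 1 = n := ⟨(n - 1).toNat, by omega⟩
    refine ⟨List.replicate (m + 1) true ++ false :: decodeF k a', ?_⟩
    rw [bval_mixed, fval_decodeF k a' hbound]
    have hmq : ((m : ℚ) + 1) = (n : ℚ) := by exact_mod_cast hm
    have h2 : (2:ℚ) ^ k ≠ 0 := by positivity
    have hA : ((a' : ℤ) : ℚ) = 2 * (a:ℚ) - (2*(n:ℚ) - 1) * 2^k := by
      rw [ha']; push_cast; ring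
    have final : ∀ (x y P : ℚ), P ≠ 0 → y - 1/2 + (2*x - (2*y-1)*P)/P/2 = x/P := by
      intro x y P hP; field_simp; ring
    push_cast
    rw [hmq, hA]
    exact final (a:ℚ) (n:ℚ) (2^k) h2

lemma exists_bval (a : ℤ) (k : ℕ) : ∃ l : List Bool, bval l = (a:ℚ) / 2 ^ k := by
  rcases lt_trichotomy a 0 with h | h | h
  · obtain ⟨l, hl⟩ := exists_bval_pos (-a) (by omega) k
    refine ⟨l.map not, ?_⟩
    rw [bval_not, hl]
    push_cast
    ring
  · exact ⟨[], by rw [h, bval_nil]; simp⟩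
  · exact exists_bval_pos a h k

/-- Berlekamp's rule is a homomorphism onto `ℤ_(2)`: the value extends
additively to a monoid homomorphism from the free commutative monoid on
strings to the additive group of dyadic rationals; it is surjective onto the
dyadic rationals, and each dyadic rational is the value of exactly one single
string. -/
theorem stmt11 :
    (∀ s t : Multiset (List Bool), bvalPos (s + t) = bvalPos s + bvalPos t) ∧
    (∀ l : List Bool, ∃ a : ℤ, ∃ k : ℕ, bval l = (a : ℚ) / 2 ^ k) ∧
    (∀ a : ℤ, ∀ k : ℕ, ∃! l : List Bool, bval l = (a : ℚ) / 2 ^ k) := by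
  refine ⟨?_, ?_, ?_⟩
  · intro s t; simp [bvalPos]
  · exact bval_dyadic
  · intro a k
    obtain ⟨l, hl⟩ := exists_bval a k
    exact ⟨l, hl, fun y hy => bval_inj y l (by rw [hy, hl])⟩
end

section
/- If the Berlekamp value of a sum of hackenbush strings is positive then Blue wins (moving first or second); if negative then Red wins; if zero then the second player wins. Equivalently: (i) from a position of value ≥ 0, every Red move yields value > 0; (ii) from a position of value > 0, Blue has a move to a position of value ≥ 0. -/
/-- A move by the player of color `c` (`true` = Blue, `false` = Red): remove a
counter of color `c` from some string together with all counters above it. -/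
def HMove (c : Bool) (s t : Multiset (List Bool)) : Prop :=
  ∃ l ∈ s, ∃ j, l.getD j (!c) = c ∧ t = (l.take j) ::ₘ s.erase l

/-- `Wins w m s` : the player of color `w` wins the hackenbush position `s`
with the player of color `m` to move (a player unable to move loses). -/
inductive Wins : Bool → Bool → Multiset (List Bool) → Prop
  | myMove (w : Bool) (s t : Multiset (List Bool)) :
      HMove w s t → Wins w (!w) t → Wins w w s
  | oppMove (w : Bool) (s : Multiset (List Bool)) :
      (∀ t, HMove (!w) s t → Wins w w t) → Wins w (!w) s

def sg (b : Bool) : ℚ := if b then 1 else -1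

def val2 (w : ℚ) : List Bool → ℚ
  | [] => 0
  | b :: t => (if b then w else -w) + val2 (w/2) t

def stp : Bool → Bool → ℚ → List Bool → Bool × Bool × ℚ
  | c, p, w, [] => (c, p, w)
  | c, p, w, b :: t => stp (c || (b != p)) b (if (c || (b != p)) then w/2 else 1) t

lemma bvalAux_nil (c p : Bool) (w : ℚ) : bvalAux c p w [] = 0 := rfl

lemma bvalAux_cons (c p : Bool) (w : ℚ) (b : Bool) (t : List Bool) :
    bvalAux c p w (b :: t) =
      (if b then (if (c || (b != p)) then w/2 else 1) else -(if (c || (b != p)) then w/2 else 1))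
        + bvalAux (c || (b != p)) b (if (c || (b != p)) then w/2 else 1) t := rfl

lemma stp_cons (c p : Bool) (w : ℚ) (b : Bool) (t : List Bool) :
    stp c p w (b :: t) = stp (c || (b != p)) b (if (c || (b != p)) then w/2 else 1) t := rfl

lemma val2_bound : ∀ (l : List Bool) (w : ℚ), 0 < w → |val2 w l| < 2 * w := by
  intro l
  induction l with
  | nil => intro w hw; simpa [val2] using by linarith
  | cons b t ih =>
      intro w hw
      have h2 : (0:ℚ) < w / 2 := by linarith
      have := ih (w/2) h2
      have habs := abs_lt.mp this
      rw [val2]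
      rcases abs_lt.mp this with ⟨h1, h2'⟩
      apply abs_lt.mpr
      constructor <;> cases b <;> simp <;> linarith

lemma bvalAux_true_eq : ∀ (l : List Bool) (p : Bool) (w : ℚ),
    bvalAux true p w l = val2 (w/2) l := by
  intro l
  induction l with
  | nil => intro p w; rfl
  | cons b t ih =>
      intro p w
      rw [bvalAux_cons]
      simp only [Bool.true_or, if_true]
      rw [ih b (w/2), val2]

lemma sg_mul_val2_bound {b : Bool} {w : ℚ} (hw : 0 < w) (t : List Bool) :
    -(2*w) < sg b * val2 w t := by
  have h := val2_bound t w hw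
  rcases abs_lt.mp h with ⟨h1, h2⟩
  cases b <;> simp [sg] <;> linarith

lemma bvalAux_false_bound : ∀ (t : List Bool) (b : Bool),
    -1 < sg b * bvalAux false b 1 t := by
  intro t
  induction t with
  | nil => intro b; cases b <;> simp [sg, bvalAux_nil]
  | cons x t ih =>
      intro b
      rw [bvalAux_cons]
      by_cases hx : x = b
      · subst hx
        simp only [Bool.false_or, bne_self_eq_false, if_false]
        have := ih x
        cases x <;> simp [sg] at this ⊢ <;> linarith
      · have hbne : (x != b) = true := by
          cases x <;> cases b <;> simp_all
        simp only [Bool.false_or, hbne, if_true]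
        rw [bvalAux_true_eq]
        have hv := abs_lt.mp (val2_bound t ((1:ℚ)/2/2) (by norm_num))
        obtain ⟨h1, h2⟩ := hv
        cases x <;> cases b <;> simp_all [sg] <;> linarith

lemma bvalAux_sign (t : List Bool) (b c p : Bool) (w : ℚ) (hw : 0 < w) :
    0 < sg b * bvalAux c p w (b :: t) := by
  rw [bvalAux_cons]
  by_cases hc : (c || (b != p)) = true
  · rw [if_pos hc, hc]
    rw [bvalAux_true_eq]
    obtain ⟨h1, h2⟩ := abs_lt.mp (val2_bound t (w/2/2) (by linarith))
    cases b <;> simp [sg] at h1 h2 ⊢ <;> linarith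
  · rw [if_neg hc]
    have hc' : (c || (b != p)) = false := by simpa using hc
    rw [hc']
    have := bvalAux_false_bound t b
    cases b <;> simp [sg] at this ⊢ <;> linarith

lemma stp_append : ∀ (x y : List Bool) (c p : Bool) (w : ℚ),
    stp c p w (x ++ y) = stp (stp c p w x).1 (stp c p w x).2.1 (stp c p w x).2.2 y := by
  intro x
  induction x with
  | nil => intro y c p w; rfl
  | cons a x ih => intro y c p w; rw [List.cons_append, stp_cons, stp_cons, ih]

lemma bvalAux_append : ∀ (x y : List Bool) (c p : Bool) (w : ℚ),
    bvalAux c p w (x ++ y) =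
      bvalAux c p w x + bvalAux (stp c p w x).1 (stp c p w x).2.1 (stp c p w x).2.2 y := by
  intro x
  induction x with
  | nil => intro y c p w; simp [bvalAux_nil, stp]
  | cons a x ih =>
      intro y c p w
      rw [List.cons_append, bvalAux_cons, bvalAux_cons, stp_cons, ih]
      ring

lemma stp_w_pos : ∀ (l : List Bool) (c p : Bool) (w : ℚ), 0 < w → 0 < (stp c p w l).2.2 := by
  intro l
  induction l with
  | nil => intro c p w hw; exact hw
  | cons a l ih =>
      intro c p w hw
      rw [stp_cons]
      apply ih
      by_cases hc : (c || (a != p)) = true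
      · rw [if_pos hc]; linarith
      · rw [if_neg hc]; norm_num

lemma bval_eq_aux : ∀ l : List Bool, bval l = bvalAux false l.headI 1 l := by
  intro l
  cases l with
  | nil => rfl
  | cons b t =>
      rw [bval, List.headI, bvalAux_cons]
      simp

lemma split_sign (x : List Bool) (b : Bool) (r : List Bool) (c p : Bool) (w : ℚ) (hw : 0 < w) :
    sg b * bvalAux c p w x < sg b * bvalAux c p w (x ++ b :: r) := by
  rw [bvalAux_append]
  have := bvalAux_sign r b (stp c p w x).1 (stp c p w x).2.1 (stp c p w x).2.2 (stp_w_pos x c p w hw)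
  nlinarith [this]

lemma headI_take (l : List Bool) (k : ℕ) : (l.take (k+1)).headI = l.headI := by
  cases l <;> simp

lemma getD_imp_lt {l : List Bool} {j : ℕ} {b : Bool} (h : l.getD j (!b) = b) : j < l.length := by
  by_contra hle
  push_neg at hle
  rw [List.getD_eq_default _ _ hle] at h
  simp at h

lemma move_strict (l : List Bool) (j : ℕ) (b : Bool) (h : l.getD j (!b) = b) :
    sg b * bval (l.take j) < sg b * bval l := by
  have hj : j < l.length := getD_imp_lt h
  have hget : l[j] = b := by rw [List.getD_eq_getElem l _ hj] at h; exact h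
  have hdec : l = l.take j ++ (b :: l.drop (j+1)) := by
    conv_lhs => rw [← List.take_append_drop j l]
    rw [List.drop_eq_getElem_cons hj, hget]
  cases j with
  | zero =>
      rw [List.take_zero, show bval ([] : List Bool) = 0 from rfl, mul_zero]
      cases l with
      | nil => simp at hj
      | cons x t =>
          have hx : x = b := by simpa using hget
          subst hx
          rw [bval_eq_aux]
          simpa using bvalAux_sign t x false x 1 (by norm_num)
  | succ k =>
      rw [bval_eq_aux l, bval_eq_aux (l.take (k+1)), headI_take]
      calc sg b * bvalAux false l.headI 1 (l.take (k+1))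
          < sg b * bvalAux false l.headI 1 (l.take (k+1) ++ b :: l.drop (k+2)) :=
            split_sign _ b _ false l.headI 1 (by norm_num)
        _ = sg b * bvalAux false l.headI 1 l := by rw [← hdec]

lemma sg_not (b : Bool) : sg (!b) = -sg b := by cases b <;> simp [sg]

lemma rep_sub1 : ∀ (r : ℕ) (p q : Bool) (w : ℚ),
    bvalAux true p w (List.replicate r q) =
      sg q * (w - (stp true p w (List.replicate r q)).2.2) := by
  intro r
  induction r with
  | zero => intro p q w; simp [bvalAux_nil, stp]
  | succ r ih =>
      intro p q w
      rw [List.replicate_succ, bvalAux_cons, stp_cons]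
      simp only [Bool.true_or, if_true]
      rw [ih q q (w/2)]
      cases q <;> simp [sg] <;> ring

lemma rep_sub2 : ∀ (r : ℕ) (b c : Bool) (w : ℚ),
    bvalAux c b w (List.replicate r (!b)) =
      sg (!b) * (w - (stp c b w (List.replicate r (!b))).2.2) := by
  intro r b c w
  cases r with
  | zero => simp [bvalAux_nil, stp]
  | succ r =>
      rw [List.replicate_succ, bvalAux_cons, stp_cons]
      have hbne : ((!b) != b) = true := by cases b <;> simp
      rw [hbne]
      simp only [Bool.or_true, if_true]
      rw [rep_sub1 r (!b) (!b) (w/2)]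
      cases b <;> simp [sg] <;> ring

lemma rep_last (c p b : Bool) (w : ℚ) (r : ℕ) :
    bvalAux c p w (b :: List.replicate r (!b)) =
      sg b * (stp c p w (b :: List.replicate r (!b))).2.2 := by
  rw [bvalAux_cons, stp_cons]
  rw [rep_sub2 r b (c || (b != p)) (if (c || (b != p)) then w/2 else 1)]
  cases b <;> simp [sg] <;> ring

lemma exists_last (b : Bool) : ∀ l : List Bool, b ∈ l →
    ∃ j, l.getD j (!b) = b ∧ l.drop (j+1) = List.replicate (l.length - (j+1)) (!b) := by
  intro l
  induction l with
  | nil => intro h; simp at h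
  | cons x t ih =>
      intro h
      by_cases hb : b ∈ t
      · obtain ⟨j, h1, h2⟩ := ih hb
        refine ⟨j+1, by simpa [List.getD_cons_succ] using h1, ?_⟩
        simp only [List.drop_succ_cons, List.length_cons]
        rw [h2]
        congr 1
        omega
      · have hx : x = b := by
          rcases List.mem_cons.mp h with h' | h'
          · exact h'.symm
          · exact absurd h' hb
        refine ⟨0, by simpa [List.getD_cons_zero] using hx, ?_⟩
        simp only [List.drop_succ_cons, List.drop_zero, List.length_cons]
        have hall : ∀ y ∈ t, y = !b := by
          intro y hy
          have : y ≠ b := fun h' => hb (h' ▸ hy)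
          cases y <;> cases b <;> simp_all
        rw [show t.length + 1 - (0+1) = t.length by omega]
        exact List.eq_replicate_iff.mpr ⟨rfl, hall⟩

def fwv (l : List Bool) : ℚ := (stp false l.headI 1 l).2.2

lemma fwv_pos (l : List Bool) : 0 < fwv l := stp_w_pos l false l.headI 1 (by norm_num)

lemma bval_take_eq (l : List Bool) (j : ℕ) :
    bval (l.take j) = bvalAux false l.headI 1 (l.take j) := by
  cases j with
  | zero => rfl
  | succ k => rw [bval_eq_aux (l.take (k+1)), headI_take]

lemma quantum (b : Bool) (l : List Bool) (hb : b ∈ l) :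
    ∃ j, l.getD j (!b) = b ∧ bval (l.take j) = bval l - sg b * fwv l := by
  obtain ⟨j, h1, h2⟩ := exists_last b l hb
  have hj : j < l.length := getD_imp_lt h1
  have hget : l[j] = b := by rw [List.getD_eq_getElem l _ hj] at h1; exact h1
  have hdec : l = l.take j ++ (b :: List.replicate (l.length - (j+1)) (!b)) := by
    conv_lhs => rw [← List.take_append_drop j l]
    rw [List.drop_eq_getElem_cons hj, hget, h2]
  refine ⟨j, h1, ?_⟩
  have hsplit := bvalAux_append (l.take j) (b :: List.replicate (l.length - (j+1)) (!b))
      false l.headI 1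
  rw [← hdec] at hsplit
  have hlast := rep_last (stp false l.headI 1 (l.take j)).1 (stp false l.headI 1 (l.take j)).2.1
      b (stp false l.headI 1 (l.take j)).2.2 (l.length - (j+1))
  have hstp := stp_append (l.take j) (b :: List.replicate (l.length - (j+1)) (!b))
      false l.headI 1
  rw [← hdec] at hstp
  rw [bval_take_eq, bval_eq_aux l, hsplit, hlast, ← hstp]
  show _ = _ + sg b * (stp false l.headI 1 l).2.2 - sg b * fwv l
  rw [fwv]
  ring

lemma stp_div : ∀ (l : List Bool) (c p : Bool) (w : ℚ), (c = false → w = 1) →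
    ∃ (z z' : ℤ), bvalAux c p w l = z * (stp c p w l).2.2 ∧ w = z' * (stp c p w l).2.2 := by
  intro l
  induction l with
  | nil => intro c p w _; exact ⟨0, 1, by simp [bvalAux_nil, stp], by simp [stp]⟩
  | cons b t ih =>
      intro c p w hinv
      have hinv' : (c || (b != p)) = false → (if (c || (b != p)) then w/2 else 1) = 1 := by
        intro h; rw [if_neg (by simp [h])]
      obtain ⟨z, z', hA, hw⟩ := ih (c || (b != p)) b (if (c || (b != p)) then w/2 else 1) hinv'
      rw [bvalAux_cons, stp_cons]
      by_cases hc : (c || (b != p)) = true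
      · rw [if_pos hc] at hA hw ⊢
        set F := (stp (c || (b != p)) b (w/2) t).2.2 with hF
        refine ⟨(if b then z' else -z') + z, 2 * z', ?_, ?_⟩
        · rw [hA]; cases b <;> simp only [if_true, if_false, Bool.false_eq_true] <;> push_cast <;>
            [linear_combination -hw; linear_combination hw]
        · push_cast; linear_combination 2 * hw
      · rw [if_neg hc] at hA hw ⊢
        have hc2 : (c || (b != p)) = false := by simpa using hc
        have hc' : c = false := by
          rcases Bool.or_eq_false_iff.mp hc2 with ⟨h1, _⟩; exact h1
        set F := (stp (c || (b != p)) b 1 t).2.2 with hF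
        refine ⟨(if b then z' else -z') + z, z', ?_, ?_⟩
        · rw [hA]; cases b <;> simp only [if_true, if_false, Bool.false_eq_true] <;> push_cast <;>
            [linear_combination -hw; linear_combination hw]
        · rw [hinv hc']; exact hw

lemma stp_pow : ∀ (l : List Bool) (c p : Bool) (w : ℚ), (c = false → w = 1) →
    ∃ k : ℕ, (stp c p w l).2.2 = w / 2^k := by
  intro l
  induction l with
  | nil => intro c p w _; exact ⟨0, by simp [stp]⟩
  | cons b t ih =>
      intro c p w hinv
      have hinv' : (c || (b != p)) = false → (if (c || (b != p)) then w/2 else 1) = 1 := by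
        intro h; rw [if_neg (by simp [h])]
      obtain ⟨k, hk⟩ := ih (c || (b != p)) b (if (c || (b != p)) then w/2 else 1) hinv'
      rw [stp_cons]
      by_cases hc : (c || (b != p)) = true
      · rw [if_pos hc] at hk ⊢
        refine ⟨k + 1, ?_⟩
        rw [hk]
        rw [pow_succ]
        ring
      · rw [if_neg hc] at hk ⊢
        have hc2 : (c || (b != p)) = false := by simpa using hc
        have hc' : c = false := (Bool.or_eq_false_iff.mp hc2).1
        rw [hinv hc']
        exact ⟨k, hk⟩

lemma fwv_div (l : List Bool) : ∃ z : ℤ, bval l = z * fwv l := by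
  obtain ⟨z, _, h, _⟩ := stp_div l false l.headI 1 (fun _ => rfl)
  exact ⟨z, by rw [bval_eq_aux l, h]; rfl⟩

lemma fwv_pow (l : List Bool) : ∃ k : ℕ, fwv l = 1 / 2^k := by
  obtain ⟨k, hk⟩ := stp_pow l false l.headI 1 (fun _ => rfl)
  exact ⟨k, hk⟩

lemma stp_const : ∀ (l : List Bool) (p : Bool), (∀ y ∈ l, y = p) → (stp false p 1 l).2.2 = 1 := by
  intro l
  induction l with
  | nil => intro p _; rfl
  | cons b t ih =>
      intro p h
      have hb : b = p := h b (List.mem_cons_self)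
      rw [stp_cons, hb]
      simp only [bne_self_eq_false, Bool.or_self, Bool.false_or, if_false]
      exact ih p (fun y hy => h y (List.mem_cons_of_mem _ hy))

lemma mem_of_fwv_ne_one (l : List Bool) (b : Bool) (h : fwv l ≠ 1) : b ∈ l := by
  have hl : l ≠ [] := by rintro rfl; exact h rfl
  have hnotall : ¬ ∀ y ∈ l, y = l.headI := fun hc => h (stp_const l l.headI hc)
  push_neg at hnotall
  obtain ⟨x, hx, hne⟩ := hnotall
  have hh : l.headI ∈ l := by
    cases l with
    | nil => exact absurd rfl hl
    | cons a t => exact List.mem_cons_self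
  have : b = x ∨ b = l.headI := by
    cases x <;> cases b <;> simp_all
  rcases this with h' | h'
  · exact h' ▸ hx
  · exact h' ▸ hh

lemma mem_of_sign (b : Bool) (l : List Bool) (h : 0 < sg b * bval l) : b ∈ l := by
  cases l with
  | nil => rw [show bval [] = 0 from rfl, mul_zero] at h; exact absurd h (lt_irrefl 0)
  | cons x t =>
      have hx : 0 < sg x * bval (x :: t) := by
        rw [bval_eq_aux]; exact bvalAux_sign t x false x 1 (by norm_num)
      by_cases hxb : x = b
      · exact hxb ▸ List.mem_cons_self
      · have : sg x = -sg b := by cases x <;> cases b <;> simp_all [sg]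
        rw [this] at hx
        linarith

lemma bvalPos_cons (a : List Bool) (s : Multiset (List Bool)) :
    bvalPos (a ::ₘ s) = bval a + bvalPos s := by
  simp [bvalPos]

lemma sum_div (q : ℚ) (s : Multiset (List Bool)) (h : ∀ l ∈ s, ∃ z : ℤ, bval l = z * q) :
    ∃ z : ℤ, bvalPos s = z * q := by
  induction s using Multiset.induction_on with
  | empty => exact ⟨0, by simp [bvalPos]⟩
  | cons a s ih =>
      obtain ⟨z, hz⟩ := h a (Multiset.mem_cons_self _ _)
      obtain ⟨z', hz'⟩ := ih (fun l hl => h l (Multiset.mem_cons_of_mem hl))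
      exact ⟨z + z', by rw [bvalPos_cons, hz, hz']; push_cast; ring⟩

lemma sum_sign_nonpos (c : Bool) : ∀ s : Multiset (List Bool),
    (∀ l ∈ s, sg c * bval l ≤ 0) → sg c * bvalPos s ≤ 0 := by
  intro s
  induction s using Multiset.induction_on with
  | empty => intro _; simp [bvalPos]
  | cons a s ih =>
      intro hc
      rw [bvalPos_cons, mul_add]
      have h1 := hc a (Multiset.mem_cons_self _ _)
      have h2 := ih (fun l hl => hc l (Multiset.mem_cons_of_mem hl))
      linarith

lemma exists_sign_mem (c : Bool) (s : Multiset (List Bool)) (h : 0 < sg c * bvalPos s) :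
    ∃ l ∈ s, 0 < sg c * bval l := by
  by_contra hc
  push_neg at hc
  have := sum_sign_nonpos c s (fun l hl => hc l hl)
  linarith

lemma exists_min_fwv (s : Multiset (List Bool)) (hs : s ≠ 0) :
    ∃ l ∈ s, ∀ l' ∈ s, fwv l ≤ fwv l' := by
  induction s using Multiset.induction_on with
  | empty => exact absurd rfl hs
  | cons a s ih =>
      by_cases h0 : s = 0
      · subst h0
        exact ⟨a, Multiset.mem_cons_self _ _, by
          intro l' hl'
          rw [Multiset.mem_cons] at hl'
          rcases hl' with h | h
          · rw [h]
          · simp at h⟩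
      · obtain ⟨l, hl, hmin⟩ := ih h0
        by_cases hle : fwv a ≤ fwv l
        · refine ⟨a, Multiset.mem_cons_self _ _, ?_⟩
          intro l' hl'
          rcases Multiset.mem_cons.mp hl' with h | h
          · rw [h]
          · exact le_trans hle (hmin l' h)
        · refine ⟨l, Multiset.mem_cons_of_mem hl, ?_⟩
          intro l' hl'
          rcases Multiset.mem_cons.mp hl' with h | h
          · rw [h]; linarith [not_le.mp hle]
          · exact hmin l' h

lemma sg_sq (b : Bool) : sg b * sg b = 1 := by cases b <;> norm_num [sg]

lemma fwv_le_one (l : List Bool) : fwv l ≤ 1 := by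
  obtain ⟨k, hk⟩ := fwv_pow l
  rw [hk]
  rw [div_le_one (by positivity)]
  exact one_le_pow₀ (by norm_num)

lemma bvalPos_erase {l : List Bool} {s : Multiset (List Bool)} (hl : l ∈ s) :
    bvalPos s = bval l + bvalPos (s.erase l) := by
  conv_lhs => rw [← Multiset.cons_erase hl]
  exact bvalPos_cons l (s.erase l)

lemma key_move (c : Bool) (s : Multiset (List Bool)) (h : 0 < sg c * bvalPos s) :
    ∃ t, HMove c s t ∧ 0 ≤ sg c * bvalPos t := by
  have hs : s ≠ 0 := by
    rintro rfl
    rw [show bvalPos 0 = 0 by simp [bvalPos], mul_zero] at h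
    exact absurd h (lt_irrefl 0)
  obtain ⟨m, hm, hmin⟩ := exists_min_fwv s hs
  set q := fwv m with hqdef
  have hqpos : 0 < q := fwv_pos m
  obtain ⟨km, hkm⟩ := fwv_pow m
  -- divisibility of every string value by q
  have hdiv : ∀ l ∈ s, ∃ z : ℤ, bval l = z * q := by
    intro l hl
    obtain ⟨z, hz⟩ := fwv_div l
    obtain ⟨kl, hkl⟩ := fwv_pow l
    have hle : kl ≤ km := by
      have := hmin l hl
      rw [hqdef, hkm] at this
      rw [hkl] at this
      have h2 : (2:ℚ)^kl ≤ 2^km := by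
        rw [div_le_div_iff₀ (by positivity) (by positivity)] at this
        linarith
      exact (pow_le_pow_iff_right₀ (by norm_num : (1:ℚ) < 2)).mp h2
    refine ⟨z * 2^(km - kl), ?_⟩
    have hpow : (2:ℚ)^km = 2^(km-kl) * 2^kl := by
      rw [← pow_add]; congr 1; omega
    have hfl : fwv l = (2:ℚ)^(km-kl) * q := by
      rw [hkl, hqdef, hkm, hpow]
      field_simp
    rw [hz, hfl]
    push_cast
    ring
  obtain ⟨Z, hZ⟩ := sum_div q s hdiv
  -- sg c * bvalPos s ≥ q
  have hq_le : q ≤ sg c * bvalPos s := by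
    set Z' : ℤ := if c then Z else -Z with hZ'def
    have hZ' : sg c * bvalPos s = (Z' : ℚ) * q := by
      cases c <;> simp [sg, hZ, hZ'def] <;> push_cast <;> ring
    have hZpos : 0 < Z' := by
      by_contra hle
      push_neg at hle
      have : (Z' : ℚ) ≤ 0 := by exact_mod_cast hle
      nlinarith [hZ' ▸ h]
    have h1 : (1:ℚ) ≤ (Z' : ℚ) := by exact_mod_cast hZpos
    rw [hZ']
    nlinarith
  -- find a string containing c with small quantum
  have hfind : ∃ l0 ∈ s, c ∈ l0 ∧ fwv l0 ≤ sg c * bvalPos s := by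
    by_cases hq1 : q < 1
    · exact ⟨m, hm, mem_of_fwv_ne_one m c (by rw [← hqdef]; linarith), by rw [← hqdef]; exact hq_le⟩
    · push_neg at hq1
      obtain ⟨l1, hl1, hsgn⟩ := exists_sign_mem c s h
      exact ⟨l1, hl1, mem_of_sign c l1 hsgn, le_trans (fwv_le_one l1) (le_trans hq1 hq_le)⟩
  obtain ⟨l0, hl0s, hl0c, hl0q⟩ := hfind
  obtain ⟨j, hgetD, htake⟩ := quantum c l0 hl0c
  refine ⟨l0.take j ::ₘ s.erase l0, ⟨l0, hl0s, j, hgetD, rfl⟩, ?_⟩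
  rw [bvalPos_cons, htake]
  have herase := bvalPos_erase hl0s
  have hsq := sg_sq c
  have key : sg c * (bval l0 - sg c * fwv l0 + bvalPos (s.erase l0))
      = sg c * bvalPos s - fwv l0 := by
    rw [herase]
    linear_combination (-(fwv l0)) * hsq
  rw [key]
  linarith

lemma hmove_strict (b : Bool) {s t : Multiset (List Bool)} (hm : HMove b s t) :
    sg b * bvalPos t < sg b * bvalPos s := by
  obtain ⟨l, hls, j, hget, rfl⟩ := hm
  rw [bvalPos_cons, bvalPos_erase hls]
  have := move_strict l j b hget
  nlinarith [this]

def msr (s : Multiset (List Bool)) : ℕ := (s.map List.length).sum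

lemma msr_cons (a : List Bool) (s : Multiset (List Bool)) : msr (a ::ₘ s) = a.length + msr s := by
  simp [msr]

lemma hmove_msr (b : Bool) {s t : Multiset (List Bool)} (hm : HMove b s t) : msr t < msr s := by
  obtain ⟨l, hls, j, hget, rfl⟩ := hm
  have hj : j < l.length := getD_imp_lt hget
  have hs : msr s = l.length + msr (s.erase l) := by
    conv_lhs => rw [← Multiset.cons_erase hls]
    exact msr_cons _ _
  rw [msr_cons, hs, List.length_take]
  omega

lemma wins_main : ∀ (n : ℕ) (s : Multiset (List Bool)) (c : Bool), msr s = n →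
    ((0 ≤ sg c * bvalPos s → Wins c (!c) s) ∧ (0 < sg c * bvalPos s → Wins c c s)) := by
  intro n
  induction n using Nat.strong_induction_on with
  | _ n ih =>
    intro s c hn
    constructor
    · intro hge
      apply Wins.oppMove
      intro t hmt
      have hstrict := hmove_strict (!c) hmt
      rw [sg_not] at hstrict
      have hpos : 0 < sg c * bvalPos t := by nlinarith [hstrict]
      exact (ih (msr t) (hn ▸ hmove_msr _ hmt) t c rfl).2 hpos
    · intro hpos
      obtain ⟨t, hmt, hge⟩ := key_move c s hpos
      exact Wins.myMove c s t hmt ((ih (msr t) (hn ▸ hmove_msr _ hmt) t c rfl).1 hge)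


/-- Outcome of sums of hackenbush strings: positive value means Blue wins
(moving first or second), negative value means Red wins, zero value means the
second player wins. Moreover (i) from a position of value ≥ 0 every Red move
yields value > 0, and (ii) from a position of value > 0 Blue has a move to a
position of value ≥ 0. -/
theorem stmt13 (s : Multiset (List Bool)) :
    (0 < bvalPos s → Wins true true s ∧ Wins true false s) ∧
    (bvalPos s < 0 → Wins false false s ∧ Wins false true s) ∧
    (bvalPos s = 0 → Wins true false s ∧ Wins false true s) ∧
    (0 ≤ bvalPos s → ∀ t, HMove false s t → 0 < bvalPos t) ∧
    (0 < bvalPos s → ∃ t, HMove true s t ∧ 0 ≤ bvalPos t) := by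
  have hT := wins_main (msr s) s true rfl
  have hF := wins_main (msr s) s false rfl
  have hsgT : sg true = 1 := rfl
  have hsgF : sg false = -1 := rfl
  refine ⟨?_, ?_, ?_, ?_, ?_⟩
  · intro h
    exact ⟨hT.2 (by rw [hsgT]; linarith), hT.1 (by rw [hsgT]; linarith)⟩
  · intro h
    exact ⟨hF.2 (by rw [hsgF]; linarith), hF.1 (by rw [hsgF]; linarith)⟩
  · intro h
    exact ⟨hT.1 (by rw [hsgT]; linarith), hF.1 (by rw [hsgF]; linarith)⟩
  · intro h t hmt
    have := hmove_strict false hmt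
    rw [hsgF] at this
    linarith
  · intro h
    obtain ⟨t, hmt, hge⟩ := key_move true s (by rw [hsgT]; linarith)
    exact ⟨t, hmt, by rw [hsgT] at hge; linarith⟩
end

section
/- (Solution of single-suit five-card) In a single-suit symmetric deal, define the trace as the sum over i of +1 if West's i-th highest card beats East's i-th highest card and −1 otherwise. Then West wins (the last trick) if the trace is positive, East wins if it is negative, and the player on lead wins if the trace is zero. -/
/-- The trace of a single-suit symmetric deal: listing both hands in
decreasing order, compare the `i`-th highest cards and count `+1` when West's
card is higher and `-1` when East's card is higher. -/
def trace (W E : Finset ℕ) : ℤ :=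
  (((W.sort (· ≥ ·)).zip (E.sort (· ≥ ·))).map
    (fun p => if p.2 < p.1 then (1 : ℤ) else -1)).sum

/-- `WestWins W E lead` : West wins the last trick in single-suit five-card
from the position where West holds `W`, East holds `E`, and West is on lead iff
`lead = true`. The player on lead plays any card; the opponent must beat it if
possible (the greedy rule) and otherwise plays any card; the higher card wins
the trick and its owner gets the lead; the winner of the last trick wins.
When the hands are empty, the player holding the lead won the last trick.
(East's choices are universally quantified; West's responses to East's leads
are given by a strategy function `resp`.) -/
inductive WestWins : Finset ℕ → Finset ℕ → Bool → Prop
  | last : WestWins ∅ ∅ true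
  | westLeads (W E : Finset ℕ) (w : ℕ) (hw : w ∈ W) :
      (∀ e ∈ E, ((∃ x ∈ E, w < x) → w < e) →
        WestWins (W.erase w) (E.erase e) (decide (e < w))) →
      WestWins W E true
  | eastLeads (W E : Finset ℕ) (hE : E.Nonempty) (resp : ℕ → ℕ)
      (hmem : ∀ e ∈ E, resp e ∈ W)
      (hgreedy : ∀ e ∈ E, (∃ x ∈ W, e < x) → e < resp e) :
      (∀ e ∈ E, WestWins (W.erase (resp e)) (E.erase e) (decide (e < resp e))) →
      WestWins W E false

namespace FiveCardAux
open List

def sg (w e : ℕ) : ℤ := if e < w then 1 else -1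

def tt (ws es : List ℕ) : ℤ :=
  ((ws.zip es).map (fun p => if p.2 < p.1 then (1 : ℤ) else -1)).sum

@[simp] lemma tt_nil_left (es : List ℕ) : tt [] es = 0 := rfl
@[simp] lemma tt_nil_right (ws : List ℕ) : tt ws [] = 0 := by simp [tt]
@[simp] lemma tt_cons (w e : ℕ) (ws es : List ℕ) :
    tt (w::ws) (e::es) = sg w e + tt ws es := by simp [tt, sg]

lemma sg_le_one (w e : ℕ) : sg w e ≤ 1 := by unfold sg; split <;> omega
lemma neg_one_le_sg (w e : ℕ) : -1 ≤ sg w e := by unfold sg; split <;> omega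
lemma sg_pos {w e : ℕ} (h : e < w) : sg w e = 1 := if_pos h
lemma sg_neg {w e : ℕ} (h : ¬ e < w) : sg w e = -1 := if_neg h
lemma sg_mono {w e e' : ℕ} (h : e' ≤ e) : sg w e ≤ sg w e' := by
  unfold sg; split <;> split <;> omega

lemma tt_append {A B : List ℕ} (C D : List ℕ) (h : A.length = B.length) :
    tt (A ++ C) (B ++ D) = tt A B + tt C D := by
  simp [tt, List.zip_append h]

lemma tt_mono : ∀ (ws : List ℕ) {es es' : List ℕ},
    Forall₂ (· ≤ ·) es' es → tt ws es ≤ tt ws es'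
  | [], _, _, _ => by simp
  | w :: ws, _, _, List.Forall₂.nil => by simp
  | w :: ws, _, _, List.Forall₂.cons hle h' => by
    simp only [tt_cons]
    exact add_le_add (sg_mono hle) (tt_mono ws h')

lemma sorted_shift : ∀ (x : ℕ) (xs : List ℕ), List.Pairwise (· ≥ ·) (x :: xs) →
    Forall₂ (· ≤ ·) xs ((x :: xs).dropLast)
  | x, [], _ => by simp
  | x, y :: ys, h => by
    have h1 : y ≤ x := (List.pairwise_cons.mp h).1 y (by simp)
    have h2 := sorted_shift y ys (List.pairwise_cons.mp h).2
    simpa using List.Forall₂.cons h1 h2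

lemma erase_forall₂ : ∀ (l : List ℕ) (a : ℕ), List.Pairwise (· ≥ ·) l → a ∈ l →
    Forall₂ (· ≤ ·) (l.erase a) l.dropLast
  | [], a, _, ha => by simp at ha
  | x :: xs, a, hs, ha => by
    by_cases hx : x = a
    · subst hx
      rw [List.erase_cons_head]
      exact sorted_shift x xs hs
    · have ha' : a ∈ xs := by
        rcases List.mem_cons.mp ha with h | h
        · exact absurd h.symm hx
        · exact h
      rcases xs with _ | ⟨y, ys⟩
      · simp at ha'
      · rw [List.erase_cons_tail (by simp [hx])]
        have : (x :: y :: ys).dropLast = x :: (y :: ys).dropLast := rfl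
        rw [this]
        exact List.Forall₂.cons le_rfl
          (erase_forall₂ (y :: ys) a (List.pairwise_cons.mp hs).2 ha')

lemma forall₂_dropLast {R : ℕ → ℕ → Prop} :
    ∀ {ws es : List ℕ}, Forall₂ R ws es → Forall₂ R ws.dropLast es.dropLast := by
  intro ws es h
  induction h with
  | nil => simp
  | @cons a b l l' hab h ih =>
    cases h with
    | nil => simpa using List.Forall₂.nil
    | @cons a' b' l₂ l₂' hab' h' =>
      exact List.Forall₂.cons hab ih

lemma tt_pos_block : ∀ (X1 : List ℕ) {X2 es : List ℕ},
    (∀ x ∈ X1, ∀ y ∈ es, y < x) → X1.length ≤ es.length →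
    tt (X1 ++ X2) es = (X1.length : ℤ) + tt X2 (es.drop X1.length)
  | [], X2, es, _, _ => by simp
  | x :: X1, X2, [], _, hl => by simp at hl
  | x :: X1, X2, e :: es, h, hl => by
    have hxe : e < x := h x (by simp) e (by simp)
    have ih := tt_pos_block X1 (X2 := X2) (es := es)
      (fun a ha b hb => h a (by simp [ha]) b (by simp [hb])) (by simpa using hl)
    simp only [cons_append, tt_cons, sg_pos hxe, ih, length_cons, drop_succ_cons]
    push_cast
    ring

lemma tt_neg_block : ∀ (Y1 : List ℕ) {Y2 ws : List ℕ},
    (∀ y ∈ Y1, ∀ x ∈ ws, x < y) → Y1.length ≤ ws.length →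
    tt ws (Y1 ++ Y2) = -(Y1.length : ℤ) + tt (ws.drop Y1.length) Y2
  | [], Y2, ws, _, _ => by simp
  | y :: Y1, Y2, [], _, hl => by simp at hl
  | y :: Y1, Y2, x :: ws, h, hl => by
    have hxy : x < y := h y (by simp) x (by simp)
    have ih := tt_neg_block Y1 (Y2 := Y2) (ws := ws)
      (fun a ha b hb => h a (by simp [ha]) b (by simp [hb])) (by simpa using hl)
    simp only [cons_append, tt_cons, sg_neg (by omega : ¬ y < x), ih, length_cons,
      drop_succ_cons]
    push_cast
    ring

lemma tt_allplus : ∀ {ws es : List ℕ}, Forall₂ (fun w e => e < w) ws es →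
    tt ws es = ws.length := by
  intro ws es h
  induction h with
  | nil => simp
  | cons hab h ih => simp [sg_pos hab, ih]; ring

lemma forall₂_mem {R : ℕ → ℕ → Prop} :
    ∀ {ws es : List ℕ}, Forall₂ R ws es → ∀ e ∈ es, ∃ w ∈ ws, R w e := by
  intro ws es h
  induction h with
  | nil => simp
  | @cons a b l l' hab h ih =>
    intro e he
    rcases List.mem_cons.mp he with rfl | he'
    · exact ⟨a, by simp, hab⟩
    · obtain ⟨w, hw, hwe⟩ := ih e he'
      exact ⟨w, by simp [hw], hwe⟩

lemma forall₂_lt_of_le : ∀ {l₁ l₂ es : List ℕ}, Forall₂ (· ≤ ·) l₁ l₂ →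
    Forall₂ (fun w e => e < w) l₁ es → Forall₂ (fun w e => e < w) l₂ es := by
  intro l₁ l₂ es h
  induction h generalizing es with
  | nil => intro h'; cases h'; exact List.Forall₂.nil
  | @cons a b l l' hab h ih =>
    intro h'
    cases h' with
    | cons hae h2 => exact List.Forall₂.cons (lt_of_lt_of_le ‹_› hab) (ih h2)

lemma tt_swap : ∀ {ws es : List ℕ}, (∀ p ∈ ws.zip es, p.1 ≠ p.2) →
    tt es ws = -tt ws es
  | [], es, _ => by simp
  | w :: ws, [], _ => by simp
  | w :: ws, e :: es, h => by
    have hne : w ≠ e := h (w, e) (by simp)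
    have ih := tt_swap (ws := ws) (es := es) (fun p hp => h p (by simp [hp]))
    simp only [tt_cons, ih]
    have : sg e w = - sg w e := by unfold sg; split <;> split <;> omega
    rw [this]; ring

lemma decomp : ∀ {ws es : List ℕ}, ws.length = es.length →
    ¬ Forall₂ (fun w e => e < w) ws es →
    ∃ A a tl B b etl, ws = A ++ a :: tl ∧ es = B ++ b :: etl ∧
      A.length = B.length ∧ ¬ (b < a) ∧ Forall₂ (fun w e => e < w) tl etl
  | [], [], _, hna => absurd List.Forall₂.nil hna
  | [], e :: es, h, _ => by simp at h
  | w :: ws, [], h, _ => by simp at h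
  | w :: ws, e :: es, h, hna => by
    by_cases hp : Forall₂ (fun w e => e < w) ws es
    · refine ⟨[], w, ws, [], e, es, rfl, rfl, rfl, ?_, hp⟩
      intro hew
      exact hna (List.Forall₂.cons hew hp)
    · obtain ⟨A, a, tl, B, b, etl, h1, h2, h3, h4, h5⟩ :=
        decomp (by simpa using h) hp
      exact ⟨w :: A, a, tl, e :: B, b, etl, by simp [h1], by simp [h2],
        by simp [h3], h4, h5⟩


lemma forall₂_concat {R : ℕ → ℕ → Prop} :
    ∀ {A B : List ℕ} {a b : ℕ}, A.length = B.length →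
      List.Forall₂ R (A ++ [a]) (B ++ [b]) → List.Forall₂ R A B ∧ R a b
  | [], [], a, b, _, h => by
    simp only [nil_append] at h
    cases h with
    | cons hab h' => exact ⟨List.Forall₂.nil, hab⟩
  | [], x :: B, a, b, hl, _ => by simp at hl
  | x :: A, [], a, b, hl, _ => by simp at hl
  | x :: A, y :: B, a, b, hl, h => by
    simp only [cons_append] at h
    cases h with
    | cons hxy h' =>
      obtain ⟨h1, h2⟩ := forall₂_concat (by simpa using hl) h'
      exact ⟨List.Forall₂.cons hxy h1, h2⟩

lemma sort_erase (W : Finset ℕ) (a : ℕ) :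
    (W.erase a).sort (· ≥ ·) = (W.sort (· ≥ ·)).erase a := by
  refine (fun hp h1 h2 => List.Perm.eq_of_pairwise' (r := (· ≥ ·)) h1 h2 hp) ?_ ?_ ?_
  · rw [← Multiset.coe_eq_coe, Finset.sort_eq, Finset.erase_val,
      ← Multiset.coe_erase, Finset.sort_eq]
  · exact Finset.pairwise_sort _ _
  · exact List.Pairwise.sublist (List.erase_sublist (a := a)) (Finset.pairwise_sort _ _)

lemma pairwise_gt (W : Finset ℕ) : (W.sort (· ≥ ·)).Pairwise (· > ·) := by
  have h1 := Finset.pairwise_sort W (· ≥ ·)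
  have h2 := Finset.sort_nodup W (· ≥ ·)
  exact (List.Pairwise.and h1 h2).imp (fun h => lt_of_le_of_ne h.1 h.2.symm)

lemma mem_sort' {W : Finset ℕ} {x : ℕ} : x ∈ W.sort (· ≥ ·) ↔ x ∈ W :=
  Finset.mem_sort _

lemma trace_eq_tt (W E : Finset ℕ) :
    trace W E = tt (W.sort (· ≥ ·)) (E.sort (· ≥ ·)) := rfl

lemma trace_erase (W E : Finset ℕ) (r e : ℕ) :
    trace (W.erase r) (E.erase e)
      = tt ((W.sort (· ≥ ·)).erase r) ((E.sort (· ≥ ·)).erase e) := by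
  rw [trace_eq_tt, sort_erase, sort_erase]

lemma pairwise_middle {L T : List ℕ} {a : ℕ} (h : (L ++ a :: T).Pairwise (· > ·)) :
    (∀ x ∈ L, a < x) ∧ (∀ y ∈ T, y < a) := by
  rw [List.pairwise_append] at h
  exact ⟨fun x hx => h.2.2 x hx a (by simp),
    fun y hy => (List.pairwise_cons.mp h.2.1).1 y hy⟩

lemma erase_middle {L T : List ℕ} {a : ℕ} (hL : ∀ x ∈ L, a < x) :
    (L ++ a :: T).erase a = L ++ T := by
  rw [List.erase_append_right _ (fun hm => absurd (hL a hm) (lt_irrefl a)),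
    List.erase_cons_head]

lemma trace_swap {W E : Finset ℕ} (hd : Disjoint W E) :
    trace E W = - trace W E := by
  rw [trace_eq_tt, trace_eq_tt]
  apply tt_swap
  intro p hp hpe
  obtain ⟨h1, h2⟩ := List.of_mem_zip hp
  exact Finset.disjoint_left.mp hd (mem_sort'.mp h1) (hpe ▸ mem_sort'.mp h2)

lemma length_erase_mem {l : List ℕ} {e : ℕ} (h : e ∈ l) :
    (l.erase e).length + 1 = l.length := by
  rw [List.length_erase_of_mem h]
  have := List.length_pos_iff.mpr (List.ne_nil_of_mem h)
  omega

lemma lead_good (W E : Finset ℕ) (hd : Disjoint W E) (hcard : W.card = E.card)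
    (hW : W.Nonempty) (h0 : 0 ≤ trace W E) :
    ∃ w ∈ W, (∀ e ∈ E, w < e → 1 ≤ trace (W.erase w) (E.erase e)) ∧
      ((∀ x ∈ E, x < w) → ∀ e ∈ E, 0 ≤ trace (W.erase w) (E.erase e)) := by
  have hlen : (W.sort (· ≥ ·)).length = (E.sort (· ≥ ·)).length := by simpa using hcard
  by_cases hap : List.Forall₂ (fun w e => e < w) (W.sort (· ≥ ·)) (E.sort (· ≥ ·))
  · -- all of West's cards beat the corresponding East cards: lead the lowest card
    obtain ⟨A, a, hws⟩ : ∃ A a, W.sort (· ≥ ·) = A ++ [a] := by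
      rcases List.eq_nil_or_concat (W.sort (· ≥ ·)) with h | ⟨A, a, h⟩
      · exfalso
        obtain ⟨x, hx⟩ := hW
        have hx' : x ∈ W.sort (· ≥ ·) := mem_sort'.mpr hx
        rw [h] at hx'; simp at hx'
      · exact ⟨A, a, by simpa [List.concat_eq_append] using h⟩
    obtain ⟨B, b, hes⟩ : ∃ B b, E.sort (· ≥ ·) = B ++ [b] := by
      rcases List.eq_nil_or_concat (E.sort (· ≥ ·)) with h | ⟨B, b, h⟩
      · exfalso; rw [hws, h] at hlen; simp at hlen
      · exact ⟨B, b, by simpa [List.concat_eq_append] using h⟩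
    have hlAB : A.length = B.length := by rw [hws, hes] at hlen; simpa using hlen
    rw [hws, hes] at hap
    obtain ⟨hapAB, hba⟩ := forall₂_concat hlAB hap
    have haW : a ∈ W := mem_sort'.mp (by rw [hws]; simp)
    have hpw := pairwise_gt W; rw [hws] at hpw
    have hAa : ∀ x ∈ A, a < x := by
      have := pairwise_middle (L := A) (T := []) (by simpa using hpw)
      exact this.1
    have herw : (W.sort (· ≥ ·)).erase a = A := by
      rw [hws]
      have := erase_middle (T := ([] : List ℕ)) hAa
      simpa using this
    have hkey : ∀ e ∈ E, (A.length : ℤ) ≤ trace (W.erase a) (E.erase e) := by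
      intro e heE
      rw [trace_erase, herw, hes]
      have hmem : e ∈ B ++ [b] := by rw [← hes]; exact mem_sort'.mpr heE
      have hsorted : (B ++ [b]).Pairwise (· ≥ ·) := by
        rw [← hes]; exact Finset.pairwise_sort _ _
      calc (A.length : ℤ) = tt A B := (tt_allplus hapAB).symm
        _ = tt A ((B ++ [b]).dropLast) := by rw [List.dropLast_concat]
        _ ≤ tt A ((B ++ [b]).erase e) := tt_mono A (erase_forall₂ _ e hsorted hmem)
    refine ⟨a, haW, ?_, ?_⟩
    · intro e heE hae
      have hmem : e ∈ B ++ [b] := by rw [← hes]; exact mem_sort'.mpr heE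
      have heb : e ≠ b := by intro h; subst h; exact absurd (lt_trans hba hae) (lt_irrefl _)
      have heB : e ∈ B := by
        rcases List.mem_append.mp hmem with h | h
        · exact h
        · exfalso; simp at h; exact heb h
      have hBne : B ≠ [] := List.ne_nil_of_mem heB
      have h1 : 1 ≤ (A.length : ℤ) := by
        have hB := List.length_pos_iff.mpr hBne
        rw [hlAB]
        exact_mod_cast hB
      exact le_trans h1 (hkey e heE)
    · intro _ e heE
      exact le_trans (by positivity) (hkey e heE)
  · -- there is a losing comparison: split at the last one
    obtain ⟨A, a, tl, B, b, etl, hws, hes, hlAB, hba, hall2⟩ := decomp hlen hap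
    have hltl : tl.length = etl.length := by
      have h1 := hlen
      rw [hws, hes] at h1
      simp only [List.length_append, List.length_cons] at h1
      omega
    have hpw := pairwise_gt W; rw [hws] at hpw
    have hpe := pairwise_gt E; rw [hes] at hpe
    have hbE : b ∈ E := mem_sort'.mp (by rw [hes]; simp)
    cases tl with
    | nil =>
      have hetl : etl = [] := List.eq_nil_of_length_eq_zero (by simpa using hltl.symm)
      subst hetl
      have haW : a ∈ W := mem_sort'.mp (by rw [hws]; simp)
      have hAa : ∀ x ∈ A, a < x := (pairwise_middle hpw).1
      have herw : (W.sort (· ≥ ·)).erase a = A := by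
        rw [hws]; simpa using erase_middle (T := ([] : List ℕ)) hAa
      refine ⟨a, haW, ?_, ?_⟩
      · intro e heE _
        rw [trace_erase, herw, hes]
        have hmem : e ∈ B ++ [b] := by rw [← hes]; exact mem_sort'.mpr heE
        have hsorted : (B ++ [b]).Pairwise (· ≥ ·) := by
          rw [← hes]; exact Finset.pairwise_sort _ _
        have htr : trace W E = tt A B + -1 := by
          rw [trace_eq_tt, hws, hes, tt_append _ _ hlAB]
          simp [sg_neg hba]
        have : tt A B ≤ tt A ((B ++ [b]).erase e) := by
          calc tt A B = tt A ((B ++ [b]).dropLast) := by rw [List.dropLast_concat]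
            _ ≤ _ := tt_mono A (erase_forall₂ _ e hsorted hmem)
        linarith [this, htr, h0]
      · intro hcant
        exact absurd (hcant b hbE) hba
    | cons c tl' =>
      obtain ⟨d, etl', rfl⟩ : ∃ d etl', etl = d :: etl' := by
        cases etl with
        | nil => simp at hltl
        | cons d etl' => exact ⟨d, etl', rfl⟩
      have hcW : c ∈ W := mem_sort'.mp (by rw [hws]; simp)
      have hwsassoc : W.sort (· ≥ ·) = (A ++ [a]) ++ c :: tl' := by rw [hws]; simp
      have hpw' : ((A ++ [a]) ++ c :: tl').Pairwise (· > ·) := by rw [← hwsassoc]; exact pairwise_gt W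
      have hLc : ∀ x ∈ A ++ [a], c < x := (pairwise_middle hpw').1
      have hac : c < a := hLc a (by simp)
      have hdc : d < c := by cases hall2 with | cons h _ => exact h
      have hall' : List.Forall₂ (fun w e => e < w) tl' etl' := by
        cases hall2 with | cons _ h => exact h
      have herw : (W.sort (· ≥ ·)).erase c = A ++ a :: tl' := by
        rw [hwsassoc, erase_middle hLc]; simp
      refine ⟨c, hcW, ?_, ?_⟩
      · intro e heE hce
        have hmemes : e ∈ E.sort (· ≥ ·) := mem_sort'.mpr heE
        rw [hes] at hmemes
        have heB : e ∈ B ++ [b] := by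
          rcases List.mem_append.mp hmemes with h | h
          · exact List.mem_append_left _ h
          · rcases List.mem_cons.mp h with rfl | h'
            · exact List.mem_append_right _ (by simp)
            · exfalso
              rcases List.mem_cons.mp h' with rfl | h''
              · omega
              · have hpe' : ((B ++ [b]) ++ d :: etl').Pairwise (· > ·) := by
                  rw [show (B ++ [b]) ++ d :: etl' = B ++ b :: d :: etl' by simp]
                  exact hpe
                have := (pairwise_middle hpe').2 e h''
                omega
        have hesassoc : E.sort (· ≥ ·) = (B ++ [b]) ++ d :: etl' := by rw [hes]; simp
        have here : (E.sort (· ≥ ·)).erase e = ((B ++ [b]).erase e) ++ d :: etl' := by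
          rw [hesassoc, List.erase_append_left _ heB]
        rw [trace_erase, herw, here]
        have hlB'' : A.length = ((B ++ [b]).erase e).length := by
          have h2 := length_erase_mem heB
          simp only [List.length_append, List.length_singleton] at h2
          omega
        have hsplit : tt (A ++ a :: tl') (((B ++ [b]).erase e) ++ d :: etl')
            = tt A ((B ++ [b]).erase e) + sg a d + tt tl' etl' := by
          rw [tt_append _ _ hlB'', tt_cons]; ring
        have hsorted : (B ++ [b]).Pairwise (· ≥ ·) := by
          have hsub : (B ++ [b]) <+ (B ++ (b :: d :: etl')) :=
            List.Sublist.append_left (List.cons_sublist_cons.mpr (List.nil_sublist _)) B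
          exact List.Pairwise.sublist hsub (by rw [← hes]; exact Finset.pairwise_sort _ _)
        have hmono : tt A B ≤ tt A ((B ++ [b]).erase e) := by
          calc tt A B = tt A ((B ++ [b]).dropLast) := by rw [List.dropLast_concat]
            _ ≤ _ := tt_mono A (erase_forall₂ _ e hsorted heB)
        have htr : trace W E = tt A B + sg a b + sg c d + tt tl' etl' := by
          rw [trace_eq_tt, hws, hes, tt_append _ _ hlAB, tt_cons, tt_cons]; ring
        have hsgad : sg a d = 1 := sg_pos (by omega)
        have hsgab : sg a b = -1 := sg_neg hba
        have hsgcd : sg c d = 1 := sg_pos hdc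
        rw [hsplit, hsgad]
        linarith [hmono]
      · intro hcant
        have := hcant b hbE
        omega

lemma follow_duck (W E : Finset ℕ) (hd : Disjoint W E) (hcard : W.card = E.card)
    {e r : ℕ} (he : e ∈ E) (hall : ∀ x ∈ W, x < e) (hr : r ∈ W)
    (hrmin : ∀ x ∈ W, r ≤ x) :
    trace W E + 1 ≤ trace (W.erase r) (E.erase e) := by
  have hlen : (W.sort (· ≥ ·)).length = (E.sort (· ≥ ·)).length := by simpa using hcard
  have hap : ¬ List.Forall₂ (fun w e => e < w) (W.sort (· ≥ ·)) (E.sort (· ≥ ·)) := by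
    intro hap
    obtain ⟨x, hx, hlt⟩ := forall₂_mem hap e (mem_sort'.mpr he)
    exact absurd hlt (by have := hall x (mem_sort'.mp hx); omega)
  obtain ⟨A, a, tl, B, b, etl, hws, hes, hlAB, hba, hall2⟩ := decomp hlen hap
  have hltl : tl.length = etl.length := by
    have h1 := hlen
    rw [hws, hes] at h1
    simp only [List.length_append, List.length_cons] at h1
    omega
  have hpw := pairwise_gt W; rw [hws] at hpw
  have heB : e ∈ B ++ [b] := by
    have hmemes : e ∈ E.sort (· ≥ ·) := mem_sort'.mpr he
    rw [hes] at hmemes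
    rcases List.mem_append.mp hmemes with h | h
    · exact List.mem_append_left _ h
    · rcases List.mem_cons.mp h with rfl | h'
      · exact List.mem_append_right _ (by simp)
      · exfalso
        obtain ⟨x, hx, hlt⟩ := forall₂_mem hall2 e h'
        have hxW : x ∈ W := mem_sort'.mp (by rw [hws]; simp [hx])
        have := hall x hxW
        omega
  have hsorted : (B ++ [b]).Pairwise (· ≥ ·) := by
    have hsub : (B ++ [b]) <+ (B ++ (b :: etl)) :=
      List.Sublist.append_left (List.cons_sublist_cons.mpr (List.nil_sublist _)) B
    exact List.Pairwise.sublist hsub (by rw [← hes]; exact Finset.pairwise_sort _ _)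
  have hlB'' : A.length = ((B ++ [b]).erase e).length := by
    have h2 := length_erase_mem heB
    simp only [List.length_append, List.length_singleton] at h2
    omega
  have hmono : tt A B ≤ tt A ((B ++ [b]).erase e) := by
    calc tt A B = tt A ((B ++ [b]).dropLast) := by rw [List.dropLast_concat]
      _ ≤ _ := tt_mono A (erase_forall₂ _ e hsorted heB)
  cases tl with
  | nil =>
    have hetl : etl = [] := List.eq_nil_of_length_eq_zero (by simpa using hltl.symm)
    subst hetl
    have haW : a ∈ W := mem_sort'.mp (by rw [hws]; simp)
    have hAa : ∀ x ∈ A, a < x := (pairwise_middle hpw).1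
    have hra : r = a := by
      have hrs : r ∈ W.sort (· ≥ ·) := mem_sort'.mpr hr
      rw [hws] at hrs
      rcases List.mem_append.mp hrs with h | h
      · exfalso; have := hAa r h; have := hrmin a haW; omega
      · simpa using h
    subst hra
    have herw : (W.sort (· ≥ ·)).erase r = A := by
      rw [hws]; simpa using erase_middle (T := ([] : List ℕ)) hAa
    have here : (E.sort (· ≥ ·)).erase e = ((B ++ [b]).erase e) := by
      rw [hes, show B ++ [b] = B ++ b :: ([] : List ℕ) by simp]
    have htr : trace W E = tt A B + -1 := by
      rw [trace_eq_tt, hws, hes, tt_append _ _ hlAB]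
      simp [sg_neg hba]
    rw [trace_erase, herw, here]
    linarith [hmono]
  | cons c tl'' =>
    obtain ⟨tl₀, m, hT⟩ : ∃ tl₀ m, c :: tl'' = tl₀ ++ [m] := by
      rcases List.eq_nil_or_concat (c :: tl'') with h | ⟨tl₀, m, h⟩
      · simp at h
      · exact ⟨tl₀, m, by simpa [List.concat_eq_append] using h⟩
    have hwsassoc : W.sort (· ≥ ·) = (A ++ a :: tl₀) ++ [m] := by
      rw [hws, hT]; simp
    have hpw2 : ((A ++ a :: tl₀) ++ m :: ([] : List ℕ)).Pairwise (· > ·) := by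
      rw [← hwsassoc]; exact pairwise_gt W
    have hLm : ∀ x ∈ A ++ a :: tl₀, m < x := (pairwise_middle hpw2).1
    have hmW : m ∈ W := mem_sort'.mp (by rw [hwsassoc]; simp)
    have hrm : r = m := by
      have hrs : r ∈ W.sort (· ≥ ·) := mem_sort'.mpr hr
      rw [hwsassoc] at hrs
      rcases List.mem_append.mp hrs with h | h
      · exfalso; have := hLm r h; have := hrmin m hmW; omega
      · simpa using h
    subst hrm
    have herw : (W.sort (· ≥ ·)).erase r = A ++ a :: tl₀ := by
      rw [hwsassoc]; simpa using erase_middle (T := ([] : List ℕ)) hLm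
    have here : (E.sort (· ≥ ·)).erase e = ((B ++ [b]).erase e) ++ etl := by
      rw [show E.sort (· ≥ ·) = (B ++ [b]) ++ etl by rw [hes]; simp,
        List.erase_append_left _ heB]
    have hsorttl : (a :: c :: tl'').Pairwise (· ≥ ·) := by
      have hsub : (a :: c :: tl'') <+ W.sort (· ≥ ·) := by
        rw [hws]; exact List.sublist_append_right A _
      exact List.Pairwise.sublist hsub (Finset.pairwise_sort _ _)
    have hshift : List.Forall₂ (· ≤ ·) (c :: tl'') ((a :: c :: tl'').dropLast) :=
      sorted_shift a (c :: tl'') hsorttl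
    have hdrop : (a :: c :: tl'').dropLast = a :: tl₀ := by
      rw [show a :: c :: tl'' = (a :: tl₀) ++ [r] by rw [hT]; simp]
      exact List.dropLast_concat ..
    rw [hdrop] at hshift
    have hAP : List.Forall₂ (fun w e => e < w) (a :: tl₀) etl :=
      forall₂_lt_of_le hshift hall2
    have httl : tt (a :: tl₀) etl = ((a :: tl₀).length : ℤ) := tt_allplus hAP
    have htl2 : tt (c :: tl'') etl = ((c :: tl'').length : ℤ) := tt_allplus hall2
    have hlen2 : (a :: tl₀).length = (c :: tl'').length := by
      rw [hT]; simp
    have htr : trace W E = tt A B + -1 + tt (c :: tl'') etl := by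
      rw [trace_eq_tt, hws, hes, tt_append _ _ hlAB, tt_cons, sg_neg hba]; ring
    rw [trace_erase, herw, here]
    have hsplit : tt (A ++ a :: tl₀) (((B ++ [b]).erase e) ++ etl)
        = tt A ((B ++ [b]).erase e) + tt (a :: tl₀) etl := tt_append _ _ hlB''
    rw [hsplit, httl, htr, htl2, hlen2]
    push_cast
    linarith [hmono]

lemma follow_beat (W E : Finset ℕ) (hd : Disjoint W E) (hcard : W.card = E.card)
    {e r : ℕ} (he : e ∈ E) (hr : r ∈ W) (hre : e < r)
    (hmin : ∀ x ∈ W, e < x → r ≤ x) :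
    trace W E - 1 ≤ trace (W.erase r) (E.erase e) := by
  obtain ⟨P, Q, hws⟩ := List.append_of_mem (mem_sort'.mpr hr)
  obtain ⟨U, V, hes⟩ := List.append_of_mem (mem_sort'.mpr he)
  have hpw := pairwise_gt W; rw [hws] at hpw
  have hpe := pairwise_gt E; rw [hes] at hpe
  obtain ⟨hPr, hQr⟩ := pairwise_middle hpw
  obtain ⟨hUe, hVe⟩ := pairwise_middle hpe
  have hQe : ∀ y ∈ Q, y < e := by
    intro y hy
    have hyW : y ∈ W := mem_sort'.mp (by rw [hws]; simp [hy])
    have hyne : y ≠ e := fun h => Finset.disjoint_left.mp hd hyW (h ▸ he)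
    have hyr := hQr y hy
    by_contra hcon
    have : e < y := by omega
    have := hmin y hyW this
    omega
  have hlen : (W.sort (· ≥ ·)).length = (E.sort (· ≥ ·)).length := by simpa using hcard
  have hlen' : P.length + 1 + Q.length = U.length + 1 + V.length := by
    have h := hlen
    rw [hws, hes] at h
    simp only [List.length_append, List.length_cons] at h
    omega
  have herw : (W.sort (· ≥ ·)).erase r = P ++ Q := by rw [hws]; exact erase_middle hPr
  have here : (E.sort (· ≥ ·)).erase e = U ++ V := by rw [hes]; exact erase_middle hUe
  rw [trace_erase, herw, here, trace_eq_tt, hws, hes]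
  by_cases hPU : U.length ≤ P.length
  · have hlt : (P.take U.length).length = U.length := by
      rw [List.length_take]; omega
    have hPdlen : (P.drop U.length).length = P.length - U.length := List.length_drop ..
    have hPdmem : ∀ x ∈ P.drop U.length, r < x := fun x hx => hPr x (List.mem_of_mem_drop hx)
    have e1 : tt (P ++ r :: Q) (U ++ e :: V)
        = tt (P.take U.length) U + (((P.drop U.length).length : ℤ) + 1)
          + tt Q (V.drop (P.drop U.length).length) := by
      conv_lhs => rw [← List.take_append_drop U.length P]
      rw [List.append_assoc, tt_append _ _ hlt,
        show P.drop U.length ++ r :: Q = (P.drop U.length ++ [r]) ++ Q by simp,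
        tt_pos_block]
      · rw [show (P.drop U.length ++ [r]).length = (P.drop U.length).length + 1 by simp,
          List.drop_succ_cons]
        push_cast; ring
      · intro x hx y hy
        have hxr : e < x := by
          rcases List.mem_append.mp hx with h | h
          · have := hPdmem x h; omega
          · simp at h; omega
        rcases List.mem_cons.mp hy with rfl | h
        · exact hxr
        · have := hVe y h; omega
      · simp only [List.length_append, List.length_singleton, List.length_cons,
          List.length_drop, List.length_nil]
        omega
    have e2 : tt (P ++ Q) (U ++ V)
        = tt (P.take U.length) U + ((P.drop U.length).length : ℤ)
          + tt Q (V.drop (P.drop U.length).length) := by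
      conv_lhs => rw [← List.take_append_drop U.length P]
      rw [List.append_assoc, tt_append _ _ hlt, tt_pos_block]
      · ring
      · intro x hx y hy
        have := hPdmem x hx
        have := hVe y hy
        omega
      · simp only [List.length_drop, List.length_cons]
        omega
    rw [e1, e2]
    linarith
  · push_neg at hPU
    have hlt : P.length = (U.take P.length).length := by
      rw [List.length_take]; omega
    have hUdlen : (U.drop P.length).length = U.length - P.length := List.length_drop ..
    obtain ⟨u0, U2, hUd⟩ : ∃ u0 U2, U.drop P.length = u0 :: U2 := by
      rcases hcon : U.drop P.length with _ | ⟨u0, U2⟩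
      · exfalso; rw [hcon] at hUdlen; simp at hUdlen; omega
      · exact ⟨u0, U2, rfl⟩
    have hU2len : U2.length + 1 = U.length - P.length := by
      rw [← hUdlen, hUd]; simp
    have hUdmem : ∀ x ∈ U.drop P.length, e < x := fun x hx => hUe x (List.mem_of_mem_drop hx)
    have hQlen : U.length - P.length ≤ Q.length := by omega
    have e1 : tt (P ++ r :: Q) (U ++ e :: V)
        = tt P (U.take P.length) + sg r u0 + (-(U2.length + 1 : ℤ))
          + tt (Q.drop (U2.length + 1)) V := by
      conv_lhs => rw [← List.take_append_drop P.length U]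
      rw [List.append_assoc, tt_append _ _ hlt, hUd,
        show (u0 :: U2) ++ e :: V = u0 :: ((U2 ++ [e]) ++ V) by simp,
        tt_cons, tt_neg_block]
      · rw [show (U2 ++ [e]).length = U2.length + 1 by simp]
        push_cast; ring
      · intro y hy x hx
        have hxe := hQe x hx
        rcases List.mem_append.mp hy with h | h
        · have : y ∈ U.drop P.length := by rw [hUd]; simp [h]
          have := hUdmem y this
          omega
        · simp at h; omega
      · simp only [List.length_append, List.length_singleton, List.length_cons,
          List.length_nil]
        omega
    have e2 : tt (P ++ Q) (U ++ V)
        = tt P (U.take P.length) + (-(U2.length + 1 : ℤ))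
          + tt (Q.drop (U2.length + 1)) V := by
      conv_lhs => rw [← List.take_append_drop P.length U]
      rw [List.append_assoc, tt_append _ _ hlt, hUd,
        show (u0 :: U2) ++ V = (u0 :: U2) ++ V by rfl,
        tt_neg_block]
      · rw [show (u0 :: U2).length = U2.length + 1 by simp]
        push_cast; ring
      · intro y hy x hx
        have hxe := hQe x hx
        have : y ∈ U.drop P.length := by rw [hUd]; exact hy
        have := hUdmem y this
        omega
      · simp only [List.length_cons]
        omega
    rw [e1, e2]
    have h1 := sg_le_one r u0
    linarith


lemma trace_empty : trace (∅ : Finset ℕ) (∅ : Finset ℕ) = 0 := by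
  simp [trace]

lemma solve : ∀ (n : ℕ) (W E : Finset ℕ), W.card = n → Disjoint W E → W.card = E.card →
    ((0 ≤ trace W E → WestWins W E true) ∧
     (1 ≤ trace W E → WestWins W E false) ∧
     (trace W E ≤ 0 → ¬ WestWins W E false) ∧
     (trace W E ≤ -1 → ¬ WestWins W E true)) := by
  intro n
  induction n using Nat.strong_induction_on with
  | _ n IH =>
    intro W E hn hd hcard
    have hIH : ∀ (W' E' : Finset ℕ), W'.card < n → Disjoint W' E' → W'.card = E'.card →
        ((0 ≤ trace W' E' → WestWins W' E' true) ∧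
         (1 ≤ trace W' E' → WestWins W' E' false) ∧
         (trace W' E' ≤ 0 → ¬ WestWins W' E' false) ∧
         (trace W' E' ≤ -1 → ¬ WestWins W' E' true)) :=
      fun W' E' h1 h2 h3 => IH W'.card h1 W' E' rfl h2 h3
    have step : ∀ {w e : ℕ}, w ∈ W → e ∈ E →
        ((W.erase w).card < n ∧ Disjoint (W.erase w) (E.erase e) ∧
          (W.erase w).card = (E.erase e).card) := by
      intro w e hw he
      have h1 : 0 < W.card := Finset.card_pos.mpr ⟨w, hw⟩
      have h2 : 0 < E.card := Finset.card_pos.mpr ⟨e, he⟩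
      refine ⟨?_, Disjoint.mono (Finset.erase_subset _ _) (Finset.erase_subset _ _) hd, ?_⟩
      · rw [Finset.card_erase_of_mem hw]; omega
      · rw [Finset.card_erase_of_mem hw, Finset.card_erase_of_mem he]; omega
    refine ⟨?_, ?_, ?_, ?_⟩
    · -- 0 ≤ trace → West wins on lead
      intro h0
      rcases W.eq_empty_or_nonempty with rfl | hWne
      · have hE : E = ∅ := by
          rw [Finset.card_empty] at hcard
          exact (Finset.card_eq_zero.mp hcard.symm)
        subst hE
        exact WestWins.last
      · obtain ⟨w, hw, hbeat, hduck⟩ := lead_good W E hd hcard hWne h0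
        refine WestWins.westLeads W E w hw ?_
        intro e he hleg
        have hne : w ≠ e := fun h => Finset.disjoint_left.mp hd hw (h ▸ he)
        obtain ⟨hc1, hd', hcard'⟩ := step hw he
        by_cases hlt : w < e
        · have h1 := hbeat e he hlt
          rw [show decide (e < w) = false from decide_eq_false (by omega)]
          exact (hIH _ _ hc1 hd' hcard').2.1 h1
        · have helt : e < w := by omega
          have hnb : ∀ x ∈ E, x < w := by
            intro x hx
            by_contra hcon
            have hnex : w ≠ x := fun h => Finset.disjoint_left.mp hd hw (h ▸ hx)
            exact absurd (hleg ⟨x, hx, by omega⟩) (by omega)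
          have h1 := hduck hnb e he
          rw [show decide (e < w) = true from decide_eq_true helt]
          exact (hIH _ _ hc1 hd' hcard').1 h1
    · -- 1 ≤ trace → West wins as follower
      intro h1
      have hEne : E.Nonempty := by
        rcases E.eq_empty_or_nonempty with rfl | h
        · exfalso
          have hW0 : W = ∅ := by
            rw [Finset.card_empty] at hcard
            exact Finset.card_eq_zero.mp hcard
          subst hW0
          rw [trace_empty] at h1
          omega
        · exact h
      have hWne : W.Nonempty := Finset.card_pos.mp (by rw [hcard]; exact Finset.card_pos.mpr hEne)
      refine WestWins.eastLeads W E hEne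
        (fun e => if h : (W.filter (fun x => e < x)).Nonempty
          then (W.filter (fun x => e < x)).min' h else W.min' hWne) ?_ ?_ ?_
      · intro e he
        split
        · next hf => exact Finset.mem_of_mem_filter _ (Finset.min'_mem _ hf)
        · exact Finset.min'_mem _ _
      · intro e he hex
        obtain ⟨x, hx, hlt⟩ := hex
        have hf : (W.filter (fun x => e < x)).Nonempty := ⟨x, Finset.mem_filter.mpr ⟨hx, hlt⟩⟩
        rw [dif_pos hf]
        exact (Finset.mem_filter.mp (Finset.min'_mem _ hf)).2
      · intro e he
        by_cases hf : (W.filter (fun x => e < x)).Nonempty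
        · rw [dif_pos hf]
          have hrW : (W.filter (fun x => e < x)).min' hf ∈ W :=
            Finset.mem_of_mem_filter _ (Finset.min'_mem _ hf)
          have hre : e < (W.filter (fun x => e < x)).min' hf :=
            (Finset.mem_filter.mp (Finset.min'_mem _ hf)).2
          have hmin : ∀ x ∈ W, e < x → (W.filter (fun x => e < x)).min' hf ≤ x := fun x hx hlt =>
            Finset.min'_le _ _ (Finset.mem_filter.mpr ⟨hx, hlt⟩)
          have hb := follow_beat W E hd hcard he hrW hre hmin
          obtain ⟨hc1, hd', hcard'⟩ := step hrW he
          rw [show decide (e < (W.filter (fun x => e < x)).min' hf) = true from decide_eq_true hre]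
          exact (hIH _ _ hc1 hd' hcard').1 (by linarith)
        · rw [dif_neg hf]
          have hrW := W.min'_mem hWne
          have hall : ∀ x ∈ W, x < e := by
            intro x hx
            have hne : x ≠ e := fun h => Finset.disjoint_left.mp hd hx (h ▸ he)
            have hnlt : ¬ e < x := fun hlt => hf ⟨x, Finset.mem_filter.mpr ⟨hx, hlt⟩⟩
            omega
          have hb := follow_duck W E hd hcard he hall hrW (fun x hx => W.min'_le x hx)
          obtain ⟨hc1, hd', hcard'⟩ := step hrW he
          rw [show decide (e < W.min' hWne) = false from decide_eq_false (by
            have := hall _ hrW; omega)]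
          exact (hIH _ _ hc1 hd' hcard').2.1 (by linarith)
    · -- trace ≤ 0 → West loses as follower
      intro h0 hWW
      cases hWW with
      | eastLeads _ _ hE resp hmem hgreedy hnext =>
        have hWne : W.Nonempty := Finset.card_pos.mp (by rw [hcard]; exact Finset.card_pos.mpr hE)
        have h0' : 0 ≤ trace E W := by have := trace_swap hd; linarith
        obtain ⟨e, heE, hbeat, hduck⟩ := lead_good E W hd.symm hcard.symm hE h0'
        have hrW : resp e ∈ W := hmem e heE
        obtain ⟨hc1, hd', hcard'⟩ := step hrW heE
        have hswap := trace_swap hd'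
        have hnx := hnext e heE
        by_cases hex : ∃ x ∈ W, e < x
        · have hlt : e < resp e := hgreedy e heE hex
          have hb : 1 ≤ trace (E.erase e) (W.erase (resp e)) := hbeat (resp e) hrW hlt
          rw [show decide (e < resp e) = true from decide_eq_true hlt] at hnx
          exact (hIH _ _ hc1 hd' hcard').2.2.2 (by linarith) hnx
        · have hall : ∀ x ∈ W, x < e := by
            intro x hx
            have hne : x ≠ e := fun h => Finset.disjoint_left.mp hd hx (h ▸ heE)
            have hnlt : ¬ e < x := fun hlt => hex ⟨x, hx, hlt⟩
            omega
          have hb : 0 ≤ trace (E.erase e) (W.erase (resp e)) := hduck hall (resp e) hrW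
          rw [show decide (e < resp e) = false from decide_eq_false (by
            have := hall _ hrW; omega)] at hnx
          exact (hIH _ _ hc1 hd' hcard').2.2.1 (by linarith) hnx
    · -- trace ≤ -1 → West loses on lead
      intro h1 hWW
      cases hWW with
      | last =>
        rw [trace_empty] at h1
        omega
      | westLeads _ _ w hw hnext =>
        have hEne : E.Nonempty := by
          rcases E.eq_empty_or_nonempty with rfl | h
          · exfalso
            have hW0 : W = ∅ := by
              rw [Finset.card_empty] at hcard
              exact Finset.card_eq_zero.mp hcard
            subst hW0
            exact absurd hw (by simp)
          · exact h
        have h1' : 1 ≤ trace E W := by have := trace_swap hd; linarith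
        by_cases hex : ∃ x ∈ E, w < x
        · obtain ⟨x0, hx0, hwx0⟩ := hex
          have hf : (E.filter (fun x => w < x)).Nonempty :=
            ⟨x0, Finset.mem_filter.mpr ⟨hx0, hwx0⟩⟩
          have heE : (E.filter (fun x => w < x)).min' hf ∈ E :=
            Finset.mem_of_mem_filter _ (Finset.min'_mem _ hf)
          have hwe : w < (E.filter (fun x => w < x)).min' hf :=
            (Finset.mem_filter.mp (Finset.min'_mem _ hf)).2
          have hmin : ∀ x ∈ E, w < x → (E.filter (fun x => w < x)).min' hf ≤ x :=
            fun x hx h => Finset.min'_le _ _ (Finset.mem_filter.mpr ⟨hx, h⟩)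
          have hb := follow_beat E W hd.symm hcard.symm hw heE hwe hmin
          obtain ⟨hc1, hd', hcard'⟩ := step hw heE
          have hswap := trace_swap hd'
          have hnx := hnext _ heE (fun _ => hwe)
          rw [show decide ((E.filter (fun x => w < x)).min' hf < w) = false from
            decide_eq_false (by omega)] at hnx
          exact (hIH _ _ hc1 hd' hcard').2.2.1 (by linarith) hnx
        · have hall : ∀ x ∈ E, x < w := by
            intro x hx
            have hne : x ≠ w := fun h => Finset.disjoint_left.mp hd hw (h ▸ hx)
            have hnlt : ¬ w < x := fun h => hex ⟨x, hx, h⟩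
            omega
          have heE := E.min'_mem hEne
          have hb := follow_duck E W hd.symm hcard.symm hw hall heE (fun x hx => E.min'_le x hx)
          obtain ⟨hc1, hd', hcard'⟩ := step hw heE
          have hswap := trace_swap hd'
          have hnx := hnext _ heE (fun hx => absurd hx hex)
          rw [show decide (E.min' hEne < w) = true from decide_eq_true (hall _ heE)] at hnx
          exact (hIH _ _ hc1 hd' hcard').2.2.2 (by linarith) hnx

end FiveCardAux

/-- Solution of single-suit five-card: for a symmetric deal (disjoint hands of
equal size), West wins if the trace is positive (whoever is on lead), East
wins if it is negative, and the player on lead wins if the trace is zero. -/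
theorem stmt16 (W E : Finset ℕ) (hdisj : Disjoint W E) (hcard : W.card = E.card) :
    (0 < trace W E → WestWins W E true ∧ WestWins W E false) ∧
    (trace W E < 0 → ¬ WestWins W E true ∧ ¬ WestWins W E false) ∧
    (trace W E = 0 → WestWins W E true ∧ ¬ WestWins W E false) := by
  obtain ⟨p1, p2, p3, p4⟩ := FiveCardAux.solve W.card W E rfl hdisj hcard
  exact ⟨fun hpos => ⟨p1 (by omega), p2 (by omega)⟩,
    fun hneg => ⟨p4 (by omega), p3 (by omega)⟩,
    fun hz => ⟨p1 (by omega), p3 (by omega)⟩⟩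
end
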